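/- arXiv:1607.01973 — 2 statements merged into one kernel-verified Lean document; each statement's English description precedes it below -/
import Mathlib

section
/- Let F be a hyperfield and S(F) the set of nonempty subsets of F that are finite hypersums a₁+⋯+aₙ of elements of F. Then (1) S(F) is closed under the addition A+B = ⋃_{a∈A,b∈B} a+b; and (2) if F is doubly-distributive, then S(F) is also closed under the multiplication A×B = {a×b | a∈A, b∈B}, and (S(F), +, ×) is a commutative semiring with additive identity {0} and multiplicative identity {1} in which multiplication distributes over addition. -/
open Set

/-! ### Set-level operations induced by a hyperoperation -/

/-- The sum of two subsets with respect to a hyperaddition. -/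
def sAddOf {R : Type*} (add : R → R → Set R) (X Y : Set R) : Set R :=
  ⋃ x ∈ X, ⋃ y ∈ Y, add x y

/-- The hypersum of a list of elements (padded with a final `zero`). -/
def hypersum {R : Type*} (add : R → R → Set R) (zero : R) (l : List R) : Set R :=
  l.foldr (fun a X => sAddOf add {a} X) {zero}

/-- The collection of all finite (nonempty) hypersums of elements. -/
def sumSet {R : Type*} (add : R → R → Set R) : Set (Set R) :=
  {A | ∃ (a : R) (l : List R), A = l.foldr (fun x X => sAddOf add {x} X) ({a} : Set R)}

/-- The nonempty subsets of a type. -/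
abbrev NSet (R : Type*) := {A : Set R // A.Nonempty}

/-- Image of a nonempty subset under a map. -/
def NSet.map {R S : Type*} (f : R → S) (A : NSet R) : NSet S := ⟨f '' A.1, A.2.image f⟩

/-- Elementwise product of nonempty subsets. -/
def nsMul {R : Type*} (mul : R → R → R) (A B : NSet R) : NSet R :=
  ⟨Set.image2 mul A.1 B.1, A.2.image2 B.2⟩

/-! ### Hyperrings and hyperfields -/

/-- The data `(add, mul, zero, one)` forms a hyperring: `(R, add)` is a canonical
hypergroup, `(R, mul)` is a commutative unital monoid, and multiplication
distributes over hyperaddition with `zero` absorbing. -/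
structure IsHyperring {R : Type*} (add : R → R → Set R) (mul : R → R → R)
    (zero one : R) : Prop where
  add_nonempty : ∀ a b, (add a b).Nonempty
  add_comm : ∀ a b, add a b = add b a
  add_zero : ∀ a, add a zero = {a}
  exists_neg : ∀ a, ∃! b, zero ∈ add a b
  add_assoc : ∀ a b c, sAddOf add (add a b) {c} = sAddOf add {a} (add b c)
  reversible : ∀ a b b' c, zero ∈ add b b' → (a ∈ add b c ↔ c ∈ add a b')
  mul_comm : ∀ a b, mul a b = mul b a
  mul_assoc : ∀ a b c, mul (mul a b) c = mul a (mul b c)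
  mul_one : ∀ a, mul a one = a
  mul_zero : ∀ a, mul a zero = zero
  distrib : ∀ a b c, mul a '' add b c = add (mul a b) (mul a c)

/-- The data forms a hyperfield: a hyperring in which every nonzero element is
a multiplicative unit. -/
structure IsHyperfield {R : Type*} (add : R → R → Set R) (mul : R → R → R)
    (zero one : R) extends IsHyperring add mul zero one : Prop where
  one_ne_zero : one ≠ zero
  inv : ∀ a, a ≠ zero → ∃ b, mul a b = one

/-- A (bundled) hyperring structure on `R`. -/
structure Hyperring (R : Type*) where
  add : R → R → Set R
  mul : R → R → R
  zero : R
  one : R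
  isHyperring : IsHyperring add mul zero one

/-- The hyperadditive inverse. -/
noncomputable def Hyperring.neg {R : Type*} (H : Hyperring R) (a : R) : R :=
  (H.isHyperring.exists_neg a).exists.choose

/-- A unit of a hyperring. -/
def Hyperring.IsUnit {R : Type*} (H : Hyperring R) (a : R) : Prop :=
  ∃ b, H.mul a b = H.one

/-- A (bundled) hyperfield structure on `R`. -/
structure Hyperfield (R : Type*) extends Hyperring R where
  one_ne_zero : one ≠ zero
  inv : ∀ a, a ≠ zero → ∃ b, mul a b = one

/-- A homomorphism of hyperrings (with respect to unbundled data):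
`f 0 = 0`, `f 1 = 1`, `f(a+b) ⊆ f a + f b` and `f(a×b) = f a × f b`. -/
structure IsHyperringHom {R S : Type*}
    (addR : R → R → Set R) (mulR : R → R → R) (zeroR oneR : R)
    (addS : S → S → Set S) (mulS : S → S → S) (zeroS oneS : S)
    (f : R → S) : Prop where
  map_zero : f zeroR = zeroS
  map_one : f oneR = oneS
  map_add : ∀ a b, f '' addR a b ⊆ addS (f a) (f b)
  map_mul : ∀ a b, f (mulR a b) = mulS (f a) (f b)

/-- A strict homomorphism of hyperrings: as above, but `f(a+b) = f a + f b`. -/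
structure IsStrictHyperringHom {R S : Type*}
    (addR : R → R → Set R) (mulR : R → R → R) (zeroR oneR : R)
    (addS : S → S → Set S) (mulS : S → S → S) (zeroS oneS : S)
    (f : R → S) : Prop where
  map_zero : f zeroR = zeroS
  map_one : f oneR = oneS
  map_add : ∀ a b, f '' addR a b = addS (f a) (f b)
  map_mul : ∀ a b, f (mulR a b) = mulS (f a) (f b)

/-! ### Fuzzy rings -/

/-- The data of a fuzzy ring: two binary operations, neutral elements,
a distinguished element `eps` and a set `null` of null elements. -/
structure FuzzyData (K : Type*) where
  add : K → K → K
  mul : K → K → K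
  zero : K
  one : K
  eps : K
  null : Set K

namespace FuzzyData

/-- Multiplicative units. -/
def IsUnit {K : Type*} (D : FuzzyData K) (a : K) : Prop := ∃ b, D.mul a b = D.one

/-- Sum of a list of elements. -/
def sum {K : Type*} (D : FuzzyData K) (l : List K) : K := l.foldr D.add D.zero

/-- A fuzzy ring is field-like if for each pair of units `a, b` there exists
`c ∈ K^× ∪ {0}` with `a + b + c` null. -/
def FieldLike {K : Type*} (D : FuzzyData K) : Prop :=
  ∀ a b, D.IsUnit a → D.IsUnit b →
    ∃ c, (D.IsUnit c ∨ c = D.zero) ∧ D.add (D.add a b) c ∈ D.null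

end FuzzyData

/-- Dress's fuzzy ring axioms (FR0)–(FR7). -/
structure IsFuzzyRing {K : Type*} (D : FuzzyData K) : Prop where
  add_comm : ∀ a b, D.add a b = D.add b a
  add_assoc : ∀ a b c, D.add (D.add a b) c = D.add a (D.add b c)
  add_zero : ∀ a, D.add a D.zero = a
  mul_comm : ∀ a b, D.mul a b = D.mul b a
  mul_assoc : ∀ a b c, D.mul (D.mul a b) c = D.mul a (D.mul b c)
  mul_one : ∀ a, D.mul a D.one = a
  zero_mul : ∀ a, D.mul D.zero a = D.zero
  unit_distrib : ∀ a b c, D.IsUnit a → D.mul a (D.add b c) = D.add (D.mul a b) (D.mul a c)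
  eps_sq : D.mul D.eps D.eps = D.one
  null_add : ∀ a ∈ D.null, ∀ b ∈ D.null, D.add a b ∈ D.null
  mul_null : ∀ (a : K), ∀ b ∈ D.null, D.mul a b ∈ D.null
  zero_mem_null : D.zero ∈ D.null
  one_not_mem_null : D.one ∉ D.null
  fr5 : ∀ a, D.IsUnit a → (D.add D.one a ∈ D.null ↔ a = D.eps)
  fr6 : ∀ a b c d, D.add a b ∈ D.null → D.add c d ∈ D.null →
    D.add (D.mul a c) (D.mul D.eps (D.mul b d)) ∈ D.null
  fr7 : ∀ a b c d, D.add a (D.mul b (D.add c d)) ∈ D.null →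
    D.add (D.add a (D.mul b c)) (D.mul b d) ∈ D.null

/-- A weak morphism of fuzzy rings: a map inducing a group homomorphism on units
which preserves null sums of units. -/
structure IsWeakMorphism {K L : Type*} (D : FuzzyData K) (E : FuzzyData L)
    (f : K → L) : Prop where
  map_unit : ∀ a, D.IsUnit a → E.IsUnit (f a)
  map_one : f D.one = E.one
  map_mul : ∀ a b, D.IsUnit a → D.IsUnit b → f (D.mul a b) = E.mul (f a) (f b)
  map_null : ∀ l : List K, (∀ a ∈ l, D.IsUnit a) →
    D.sum l ∈ D.null → E.sum (l.map f) ∈ E.null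

/-- A strong morphism of fuzzy rings. -/
structure IsStrongMorphism {K L : Type*} (D : FuzzyData K) (E : FuzzyData L)
    (f : K → L) : Prop where
  map_one : f D.one = E.one
  map_zero : f D.zero = E.zero
  map_mul : ∀ a b, D.IsUnit a → f (D.mul a b) = E.mul (f a) (f b)
  map_null : ∀ l : List (K × K),
    D.sum (l.map fun p => D.mul p.1 p.2) ∈ D.null →
    E.sum (l.map fun p => E.mul (f p.1) (f p.2)) ∈ E.null

/-! ### The functor 𝓕 from hyperrings to fuzzy rings -/

/-- The fuzzy-ring data `𝓕(R)` associated to a hyperring `R`: the nonempty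
subsets of `R` with subset addition and multiplication, `ε = {-1}`, and null
elements the subsets containing `0`. -/
noncomputable def Hyperring.Fuzzy {R : Type*} (H : Hyperring R) : FuzzyData (NSet R) where
  add A B := ⟨sAddOf H.add A.1 B.1, by
    obtain ⟨a, ha⟩ := A.2
    obtain ⟨b, hb⟩ := B.2
    obtain ⟨c, hc⟩ := H.isHyperring.add_nonempty a b
    exact ⟨c, Set.mem_biUnion ha (Set.mem_biUnion hb hc)⟩⟩
  mul A B := nsMul H.mul A B
  zero := ⟨{H.zero}, Set.singleton_nonempty _⟩
  one := ⟨{H.one}, Set.singleton_nonempty _⟩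
  eps := ⟨{H.neg H.one}, Set.singleton_nonempty _⟩
  null := {A | H.zero ∈ A.1}

/-! ### The functor 𝒢 from field-like fuzzy rings to hyperfields -/

/-- The carrier `K^× ∪ {0}` of `𝒢(K)`. -/
def GCarrier {K : Type*} (D : FuzzyData K) := {a : K // D.IsUnit a ∨ a = D.zero}

/-- The hyperaddition of `𝒢(K)`: `a ⊕ b = {c : a + b + ε c ∈ K₀}`. -/
def Gadd {K : Type*} (D : FuzzyData K) (a b : GCarrier D) : Set (GCarrier D) :=
  {c | D.add (D.add a.1 b.1) (D.mul D.eps c.1) ∈ D.null}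

/-- The zero element of `𝒢(K)`. -/
def Gzero {K : Type*} (D : FuzzyData K) : GCarrier D := ⟨D.zero, Or.inr rfl⟩

/-- The one element of `𝒢(K)`. -/
def Gone {K : Type*} {D : FuzzyData K} (h : IsFuzzyRing D) : GCarrier D :=
  ⟨D.one, Or.inl ⟨D.one, h.mul_one D.one⟩⟩

/-- The multiplication of `𝒢(K)`. -/
def Gmul {K : Type*} {D : FuzzyData K} (h : IsFuzzyRing D) (a b : GCarrier D) :
    GCarrier D :=
  ⟨D.mul a.1 b.1, by
    rcases b.2 with hb | hb
    · rcases a.2 with ha | ha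
      · left
        obtain ⟨a', ha'⟩ := ha
        obtain ⟨b', hb'⟩ := hb
        refine ⟨D.mul a' b', ?_⟩
        rw [h.mul_assoc a.1 b.1 (D.mul a' b'), ← h.mul_assoc b.1 a' b',
          h.mul_comm b.1 a', h.mul_assoc a' b.1 b', hb', h.mul_one, ha']
      · right; rw [ha, h.zero_mul]
    · right; rw [hb, h.mul_comm, h.zero_mul]⟩

open Classical in
/-- The extension of a weak morphism to `𝒢(K) → 𝒢(L)`, sending `0` to `0`. -/
noncomputable def Gmap {K L : Type*} {D : FuzzyData K} {E : FuzzyData L} {f : K → L}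
    (hf : IsWeakMorphism D E f) (a : GCarrier D) : GCarrier E :=
  if h : a.1 = D.zero then Gzero E
  else ⟨f a.1, Or.inl (hf.map_unit a.1 (a.2.resolve_right h))⟩

/-- The canonical map `F → 𝒢(𝓕(F))`, `x ↦ {x}`, for a hyperfield `F`. -/
noncomputable def toG {R : Type*} (F : Hyperfield R) (x : R) :
    GCarrier F.toHyperring.Fuzzy :=
  ⟨⟨{x}, Set.singleton_nonempty x⟩, by
    by_cases hx : x = F.toHyperring.zero
    · exact Or.inr (by subst hx; rfl)
    · obtain ⟨y, hy⟩ := F.inv x hx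
      exact Or.inl ⟨⟨{y}, Set.singleton_nonempty y⟩, by
        apply Subtype.ext
        show Set.image2 F.toHyperring.mul {x} {y} = {F.toHyperring.one}
        rw [Set.image2_singleton, hy]⟩⟩

/-! ### Doubly-distributive hyperfields -/

/-- A hyperfield is doubly-distributive if `(a+b)(c+d) = ac + ad + bc + bd`. -/
def Hyperfield.DoublyDistributive {R : Type*} (F : Hyperfield R) : Prop :=
  ∀ a b c d : R,
    Set.image2 F.mul (F.add a b) (F.add c d) =
      sAddOf F.add (sAddOf F.add (F.add (F.mul a c) (F.mul a d)) {F.mul b c})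
        {F.mul b d}

/-! ### The tropical hyperfield of a totally ordered abelian group, and K_Γ -/

/-- The hyperaddition of the hyperfield `H_Γ` on `Γ ∪ {0}`. -/
def tropAdd (Γ : Type*) [CommGroup Γ] [LinearOrder Γ] [IsOrderedMonoid Γ] (x y : WithZero Γ) :
    Set (WithZero Γ) :=
  if x = y then Set.Iic x else {max x y}

/-- The underlying set of the fuzzy ring `K_Γ`: all singletons and all
intervals `[0, a]` in `Γ ∪ {0}`. -/
def KgSet (Γ : Type*) [CommGroup Γ] [LinearOrder Γ] [IsOrderedMonoid Γ] : Set (Set (WithZero Γ)) :=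
  {A | (∃ a : WithZero Γ, A = {a}) ∨ ∃ a : WithZero Γ, A = Set.Iic a}

open Classical in
/-- The casewise addition of `K_Γ`. -/
noncomputable def KgAdd (Γ : Type*) [CommGroup Γ] [LinearOrder Γ] [IsOrderedMonoid Γ]
    (A B : Set (WithZero Γ)) : Set (WithZero Γ) :=
  if h : ∃ a b : WithZero Γ, A = {a} ∧ B = {b} then
    if h.choose = h.choose_spec.choose then Set.Iic h.choose
    else {max h.choose h.choose_spec.choose}
  else if h : ∃ a b : WithZero Γ, A = {a} ∧ B = Set.Iic b then
    if h.choose ≤ h.choose_spec.choose then Set.Iic h.choose_spec.choose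
    else {h.choose}
  else if h : ∃ a b : WithZero Γ, A = Set.Iic a ∧ B = {b} then
    if h.choose_spec.choose ≤ h.choose then Set.Iic h.choose
    else {h.choose_spec.choose}
  else if h : ∃ a b : WithZero Γ, A = Set.Iic a ∧ B = Set.Iic b then
    Set.Iic (max h.choose h.choose_spec.choose)
  else ∅

/-- The carrier of `K_Γ` as a subtype. -/
def Kg (Γ : Type*) [CommGroup Γ] [LinearOrder Γ] [IsOrderedMonoid Γ] := {A : Set (WithZero Γ) // A ∈ KgSet Γ}

/-- The inclusion `K_Γ → 𝓕(H_Γ)`. -/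
noncomputable def KgToF (Γ : Type*) [CommGroup Γ] [LinearOrder Γ] [IsOrderedMonoid Γ] (A : Kg Γ) : NSet (WithZero Γ) :=
  ⟨A.1, by
    rcases A.2 with ⟨a, h⟩ | ⟨a, h⟩
    · rw [h]; exact Set.singleton_nonempty a
    · rw [h]; exact ⟨a, Set.mem_Iic.2 le_rfl⟩⟩

/-! ### Grassmann–Plücker functions -/

/-- A Grassmann–Plücker function of rank `r+1` on `E` with coefficients in a
hyperfield `F`. -/
noncomputable def IsGPHyper {R E : Type*} [Fintype E] (F : Hyperfield R) (r : ℕ)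
    (φ : (Fin (r + 1) → E) → R) : Prop :=
  (∃ x, φ x ≠ F.zero) ∧
  (∀ x : Fin (r + 1) → E, ∀ i j : Fin (r + 1), i ≠ j → x i = x j → φ x = F.zero) ∧
  (∀ (x : Fin (r + 1) → E) (σ : Equiv.Perm (Fin (r + 1))), Equiv.Perm.sign σ = -1 →
    φ (x ∘ σ) = F.toHyperring.neg (φ x)) ∧
  (∀ (x : Fin (r + 2) → E) (y : Fin r → E),
    F.zero ∈ hypersum F.add F.zero
      ((List.finRange (r + 2)).map fun (k : Fin (r + 2)) =>
        if Even (k : ℕ)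
        then F.toHyperring.neg (F.mul (φ (x ∘ k.succAbove)) (φ (Fin.cons (x k) y)))
        else F.mul (φ (x ∘ k.succAbove)) (φ (Fin.cons (x k) y))))

/-- A Grassmann–Plücker function of rank `r+1` on `E` with coefficients in a
fuzzy ring (given by its data `D`). -/
def IsGPFuzzy {K E : Type*} [Fintype E] (D : FuzzyData K) (r : ℕ)
    (φ : (Fin (r + 1) → E) → K) : Prop :=
  (∀ x, D.IsUnit (φ x) ∨ φ x = D.zero) ∧
  (∃ x, φ x ≠ D.zero) ∧
  (∀ x : Fin (r + 1) → E, ∀ i j : Fin (r + 1), i ≠ j → x i = x j → φ x = D.zero) ∧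
  (∀ (x : Fin (r + 1) → E) (σ : Equiv.Perm (Fin (r + 1))), Equiv.Perm.sign σ = -1 →
    φ (x ∘ σ) = D.mul D.eps (φ x)) ∧
  (∀ (x : Fin (r + 2) → E) (y : Fin r → E),
    D.sum ((List.finRange (r + 2)).map fun (k : Fin (r + 2)) =>
      if Even (k : ℕ)
      then D.mul D.eps (D.mul (φ (x ∘ k.succAbove)) (φ (Fin.cons (x k) y)))
      else D.mul (φ (x ∘ k.succAbove)) (φ (Fin.cons (x k) y))) ∈ D.null)

section SumSetHelpers

variable {R : Type*} {add : R → R → Set R} {mul : R → R → R}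

lemma mem_sAddOf {X Y : Set R} {t : R} :
    t ∈ sAddOf add X Y ↔ ∃ x ∈ X, ∃ y ∈ Y, t ∈ add x y := by
  simp [sAddOf]

lemma sAddOf_singleton_singleton (a b : R) : sAddOf add ({a} : Set R) {b} = add a b := by
  simp [sAddOf]

lemma singleton_mem_sumSet (a : R) : ({a} : Set R) ∈ sumSet add :=
  ⟨a, [], rfl⟩

lemma cons_mem_sumSet {X : Set R} (x : R) (hX : X ∈ sumSet add) :
    sAddOf add {x} X ∈ sumSet add := by
  obtain ⟨a, l, rfl⟩ := hX
  exact ⟨a, x :: l, rfl⟩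

lemma sumSet_induction (P : Set R → Prop)
    (h1 : ∀ a : R, P {a})
    (h2 : ∀ (x : R) (X : Set R), X ∈ sumSet add → P X → P (sAddOf add {x} X)) :
    ∀ A ∈ sumSet add, P A := by
  rintro A ⟨a, l, rfl⟩
  induction l with
  | nil => exact h1 a
  | cons x l ih => exact h2 x _ ⟨a, l, rfl⟩ ih

lemma sumSet_nonempty (h0 : ∀ a b, (add a b).Nonempty) :
    ∀ A ∈ sumSet add, A.Nonempty := by
  refine sumSet_induction _ (fun a => Set.singleton_nonempty a) (fun x X _ hX => ?_)
  obtain ⟨y, hy⟩ := hX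
  obtain ⟨t, ht⟩ := h0 x y
  exact ⟨t, (mem_sAddOf).2 ⟨x, rfl, y, hy, ht⟩⟩

lemma sAddOf_comm' (h : ∀ a b : R, add a b = add b a) (X Y : Set R) :
    sAddOf add X Y = sAddOf add Y X := by
  ext t
  simp only [mem_sAddOf]
  constructor <;> rintro ⟨x, hx, y, hy, ht⟩ <;> exact ⟨y, hy, x, hx, by rwa [h]⟩

lemma sAddOf_assoc'
    (h : ∀ a b c : R, sAddOf add (add a b) {c} = sAddOf add {a} (add b c))
    (X Y Z : Set R) :
    sAddOf add (sAddOf add X Y) Z = sAddOf add X (sAddOf add Y Z) := by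
  have hmem1 : ∀ a b c t : R, t ∈ sAddOf add (add a b) ({c} : Set R) ↔
      ∃ w ∈ add a b, t ∈ add w c := by
    intro a b c t; simp [mem_sAddOf]
  have hmem2 : ∀ a b c t : R, t ∈ sAddOf add ({a} : Set R) (add b c) ↔
      ∃ v ∈ add b c, t ∈ add a v := by
    intro a b c t; simp [mem_sAddOf]
  ext t
  simp only [mem_sAddOf]
  constructor
  · rintro ⟨w, ⟨x, hx, y, hy, hw⟩, z, hz, ht⟩
    have := (hmem1 x y z t).2 ⟨w, hw, ht⟩
    rw [h] at this
    obtain ⟨v, hv, ht'⟩ := (hmem2 x y z t).1 this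
    exact ⟨x, hx, v, ⟨y, hy, z, hz, hv⟩, ht'⟩
  · rintro ⟨x, hx, v, ⟨y, hy, z, hz, hv⟩, ht⟩
    have := (hmem2 x y z t).2 ⟨v, hv, ht⟩
    rw [← h] at this
    obtain ⟨w, hw, ht'⟩ := (hmem1 x y z t).1 this
    exact ⟨w, ⟨x, hx, y, hy, hw⟩, z, hz, ht'⟩

lemma sAddOf_zero' {zero : R} (h : ∀ a : R, add a zero = {a}) (X : Set R) :
    sAddOf add X {zero} = X := by
  ext t
  simp only [mem_sAddOf, Set.mem_singleton_iff]
  constructor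
  · rintro ⟨x, hx, y, rfl, ht⟩
    rw [h] at ht
    rwa [ht]
  · intro ht
    exact ⟨t, ht, zero, rfl, by rw [h]; rfl⟩

lemma sAddOf_mem_sumSet
    (h : ∀ a b c : R, sAddOf add (add a b) {c} = sAddOf add {a} (add b c)) :
    ∀ A ∈ sumSet add, ∀ B ∈ sumSet add, sAddOf add A B ∈ sumSet add := by
  intro A hA
  refine sumSet_induction (add := add)
    (fun A => ∀ B ∈ sumSet add, sAddOf add A B ∈ sumSet add) ?_ ?_ A hA
  · rintro a B ⟨b, m, rfl⟩
    exact ⟨b, a :: m, rfl⟩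
  · intro x X _ ih B hB
    rw [sAddOf_assoc' h]
    exact cons_mem_sumSet x (ih B hB)

lemma sAddOf_singleton_left_eq (x : R) (X : Set R) :
    sAddOf add ({x} : Set R) X = ⋃ y ∈ X, add x y := by
  ext t; simp [mem_sAddOf]

lemma image2_biUnion_left {ι : Type*} (S : ι → Set R) (T : Set ι) (Z : Set R) :
    Set.image2 mul (⋃ i ∈ T, S i) Z = ⋃ i ∈ T, Set.image2 mul (S i) Z := by
  ext t; simp only [Set.mem_image2, Set.mem_iUnion]; tauto

lemma sAddOf_biUnion_right {ι : Type*} (P : Set R) (T : Set ι) (Q : ι → Set R) :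
    sAddOf add P (⋃ i ∈ T, Q i) = ⋃ i ∈ T, sAddOf add P (Q i) := by
  ext t; simp only [mem_sAddOf, Set.mem_iUnion]; tauto

lemma sAddOf_exchange
    (hc : ∀ a b : R, add a b = add b a)
    (ha : ∀ a b c : R, sAddOf add (add a b) {c} = sAddOf add {a} (add b c))
    (P Q S T : Set R) :
    sAddOf add (sAddOf add P Q) (sAddOf add S T)
      = sAddOf add (sAddOf add P S) (sAddOf add Q T) := by
  rw [sAddOf_assoc' ha, ← sAddOf_assoc' ha Q S T, sAddOf_comm' hc Q S,
    sAddOf_assoc' ha S Q T, ← sAddOf_assoc' ha P S _]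

lemma image2_sAddOf_singleton
    (hmc : ∀ a b : R, mul a b = mul b a)
    (hd : ∀ a b c : R, mul a '' add b c = add (mul a b) (mul a c))
    (X Y : Set R) (b : R) :
    Set.image2 mul (sAddOf add X Y) {b}
      = sAddOf add (Set.image2 mul X {b}) (Set.image2 mul Y {b}) := by
  have key : ∀ x y : R, (fun s => mul s b) '' add x y = add (mul x b) (mul y b) := by
    intro x y
    have h1 := hd b x y
    rw [hmc b x, hmc b y] at h1
    rw [← h1]
    exact Set.image_congr fun s _ => hmc s b
  ext t
  rw [Set.image2_singleton_right, Set.image2_singleton_right, Set.image2_singleton_right]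
  constructor
  · rintro ⟨s, hs, rfl⟩
    obtain ⟨x, hx, y, hy, hsxy⟩ := mem_sAddOf.1 hs
    refine mem_sAddOf.2 ⟨mul x b, ⟨x, hx, rfl⟩, mul y b, ⟨y, hy, rfl⟩, ?_⟩
    rw [← key x y]
    exact ⟨s, hsxy, rfl⟩
  · intro ht
    obtain ⟨u, ⟨x, hx, rfl⟩, v, ⟨y, hy, rfl⟩, h2⟩ := mem_sAddOf.1 ht
    rw [← key x y] at h2
    obtain ⟨s, hs, rfl⟩ := h2
    exact ⟨s, mem_sAddOf.2 ⟨x, hx, y, hy, hs⟩, rfl⟩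

lemma image2_singleton_mem_sumSet
    (hmc : ∀ a b : R, mul a b = mul b a)
    (hd : ∀ a b c : R, mul a '' add b c = add (mul a b) (mul a c)) :
    ∀ A ∈ sumSet add, ∀ b : R, Set.image2 mul A {b} ∈ sumSet add := by
  refine sumSet_induction _ ?_ ?_
  · intro a b
    rw [Set.image2_singleton]
    exact singleton_mem_sumSet _
  · intro x X hX ih b
    rw [image2_sAddOf_singleton hmc hd, Set.image2_singleton]
    exact cons_mem_sumSet _ (ih b)

lemma image2_add_of_mem
    (hc : ∀ a b : R, add a b = add b a)
    (ha : ∀ a b c : R, sAddOf add (add a b) {c} = sAddOf add {a} (add b c))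
    (hmc : ∀ a b : R, mul a b = mul b a)
    (hd : ∀ a b c : R, mul a '' add b c = add (mul a b) (mul a c))
    (hdd : ∀ a b c d : R, Set.image2 mul (add a b) (add c d) =
      sAddOf add (sAddOf add (add (mul a c) (mul a d)) {mul b c}) {mul b d}) :
    ∀ A ∈ sumSet add, ∀ c d : R, Set.image2 mul A (add c d)
      = sAddOf add (Set.image2 mul A {c}) (Set.image2 mul A {d}) := by
  have base : ∀ a c d : R, Set.image2 mul ({a} : Set R) (add c d)
      = sAddOf add (Set.image2 mul {a} {c}) (Set.image2 mul {a} {d}) := by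
    intro a c d
    rw [Set.image2_singleton_left, hd, Set.image2_singleton, Set.image2_singleton,
      sAddOf_singleton_singleton]
  refine sumSet_induction _ base ?_
  intro x X hX ih c d
  have hXdec : Set.image2 mul X (add c d) = ⋃ y ∈ X, Set.image2 mul {y} (add c d) := by
    conv_lhs => rw [← Set.biUnion_of_singleton X]
    exact image2_biUnion_left _ _ _
  calc Set.image2 mul (sAddOf add {x} X) (add c d)
      = ⋃ y ∈ X, Set.image2 mul (add x y) (add c d) := by
        rw [sAddOf_singleton_left_eq, image2_biUnion_left]
    _ = ⋃ y ∈ X, sAddOf add (add (mul x c) (mul x d)) (Set.image2 mul {y} (add c d)) := by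
        refine Set.iUnion₂_congr fun y _ => ?_
        rw [hdd x y c d, sAddOf_assoc' ha, sAddOf_singleton_singleton,
          Set.image2_singleton_left, hd]
    _ = sAddOf add (add (mul x c) (mul x d)) (Set.image2 mul X (add c d)) := by
        rw [hXdec, sAddOf_biUnion_right]
    _ = sAddOf add (sAddOf add {mul x c} {mul x d})
          (sAddOf add (Set.image2 mul X {c}) (Set.image2 mul X {d})) := by
        rw [ih c d, sAddOf_singleton_singleton]
    _ = sAddOf add (sAddOf add {mul x c} (Set.image2 mul X {c}))
          (sAddOf add {mul x d} (Set.image2 mul X {d})) :=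
        sAddOf_exchange hc ha _ _ _ _
    _ = sAddOf add (Set.image2 mul (sAddOf add {x} X) {c})
          (Set.image2 mul (sAddOf add {x} X) {d}) := by
        rw [image2_sAddOf_singleton hmc hd, image2_sAddOf_singleton hmc hd,
          Set.image2_singleton, Set.image2_singleton]

lemma image2_sAddOf_of_mem
    (hc : ∀ a b : R, add a b = add b a)
    (ha : ∀ a b c : R, sAddOf add (add a b) {c} = sAddOf add {a} (add b c))
    (hmc : ∀ a b : R, mul a b = mul b a)
    (hd : ∀ a b c : R, mul a '' add b c = add (mul a b) (mul a c))
    (hdd : ∀ a b c d : R, Set.image2 mul (add a b) (add c d) =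
      sAddOf add (sAddOf add (add (mul a c) (mul a d)) {mul b c}) {mul b d}) :
    ∀ A ∈ sumSet add, ∀ X Y : Set R, Set.image2 mul A (sAddOf add X Y)
      = sAddOf add (Set.image2 mul A X) (Set.image2 mul A Y) := by
  intro A hA X Y
  have L1 := image2_add_of_mem hc ha hmc hd hdd A hA
  ext t
  constructor
  · intro ht
    obtain ⟨a, haA, s, hs, rfl⟩ := Set.mem_image2.1 ht
    obtain ⟨x, hx, y, hy, hsxy⟩ := mem_sAddOf.1 hs
    have h1 : mul a s ∈ Set.image2 mul A (add x y) := Set.mem_image2_of_mem haA hsxy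
    rw [L1 x y] at h1
    obtain ⟨u, hu, v, hv, h2⟩ := mem_sAddOf.1 h1
    refine mem_sAddOf.2 ⟨u, ?_, v, ?_, h2⟩
    · obtain ⟨a', ha', x', hx', rfl⟩ := Set.mem_image2.1 hu
      rw [Set.mem_singleton_iff] at hx'
      subst hx'
      exact Set.mem_image2_of_mem ha' hx
    · obtain ⟨a', ha', y', hy', rfl⟩ := Set.mem_image2.1 hv
      rw [Set.mem_singleton_iff] at hy'
      subst hy'
      exact Set.mem_image2_of_mem ha' hy
  · intro ht
    obtain ⟨u, hu, v, hv, h2⟩ := mem_sAddOf.1 ht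
    obtain ⟨a, haA, x', hx', rfl⟩ := Set.mem_image2.1 hu
    obtain ⟨a', ha', y', hy', rfl⟩ := Set.mem_image2.1 hv
    have h3 : t ∈ sAddOf add (Set.image2 mul A {x'}) (Set.image2 mul A {y'}) :=
      mem_sAddOf.2 ⟨mul a x', Set.mem_image2_of_mem haA rfl, mul a' y',
        Set.mem_image2_of_mem ha' rfl, h2⟩
    rw [← L1 x' y'] at h3
    have hsub : add x' y' ⊆ sAddOf add X Y := fun s hs =>
      mem_sAddOf.2 ⟨x', hx', y', hy', hs⟩
    exact Set.image2_subset Set.Subset.rfl hsub h3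

lemma image2_mem_sumSet
    (hc : ∀ a b : R, add a b = add b a)
    (ha : ∀ a b c : R, sAddOf add (add a b) {c} = sAddOf add {a} (add b c))
    (hmc : ∀ a b : R, mul a b = mul b a)
    (hd : ∀ a b c : R, mul a '' add b c = add (mul a b) (mul a c))
    (hdd : ∀ a b c d : R, Set.image2 mul (add a b) (add c d) =
      sAddOf add (sAddOf add (add (mul a c) (mul a d)) {mul b c}) {mul b d}) :
    ∀ A ∈ sumSet add, ∀ B ∈ sumSet add, Set.image2 mul A B ∈ sumSet add := by
  intro A hA
  refine sumSet_induction (fun B => Set.image2 mul A B ∈ sumSet add) ?_ ?_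
  · intro b
    exact image2_singleton_mem_sumSet hmc hd A hA b
  · intro y Y hY ih
    rw [image2_sAddOf_of_mem hc ha hmc hd hdd A hA]
    exact sAddOf_mem_sumSet ha _ (image2_singleton_mem_sumSet hmc hd A hA y) _ ih

end SumSetHelpers

/-- Let `F` be a hyperfield and `S(F)` the set of nonempty subsets of
`F` that are finite hypersums of elements of `F`. Then (1) `S(F)` is closed under the
subset addition; and (2) if `F` is doubly-distributive, `S(F)` is closed under the
elementwise multiplication and `(S(F), +, ×)` is a commutative semiring with additive
identity `{0}` and multiplicative identity `{1}`. -/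
theorem sumSet_semiring {R : Type*} (F : Hyperfield R) :
    (∀ A ∈ sumSet F.add, ∀ B ∈ sumSet F.add, sAddOf F.add A B ∈ sumSet F.add) ∧
    (F.DoublyDistributive →
      (∀ A ∈ sumSet F.add, ∀ B ∈ sumSet F.add,
        Set.image2 F.mul A B ∈ sumSet F.add) ∧
      ({F.zero} ∈ sumSet F.add) ∧ ({F.one} ∈ sumSet F.add) ∧
      (∀ A ∈ sumSet F.add, ∀ B ∈ sumSet F.add,
        sAddOf F.add A B = sAddOf F.add B A) ∧
      (∀ A ∈ sumSet F.add, ∀ B ∈ sumSet F.add, ∀ C ∈ sumSet F.add,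
        sAddOf F.add (sAddOf F.add A B) C = sAddOf F.add A (sAddOf F.add B C)) ∧
      (∀ A ∈ sumSet F.add, sAddOf F.add A {F.zero} = A) ∧
      (∀ A ∈ sumSet F.add, ∀ B ∈ sumSet F.add,
        Set.image2 F.mul A B = Set.image2 F.mul B A) ∧
      (∀ A ∈ sumSet F.add, ∀ B ∈ sumSet F.add, ∀ C ∈ sumSet F.add,
        Set.image2 F.mul (Set.image2 F.mul A B) C
          = Set.image2 F.mul A (Set.image2 F.mul B C)) ∧
      (∀ A ∈ sumSet F.add, Set.image2 F.mul A {F.one} = A) ∧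
      (∀ A ∈ sumSet F.add, Set.image2 F.mul A {F.zero} = {F.zero}) ∧
      (∀ A ∈ sumSet F.add, ∀ B ∈ sumSet F.add, ∀ C ∈ sumSet F.add,
        Set.image2 F.mul A (sAddOf F.add B C)
          = sAddOf F.add (Set.image2 F.mul A B) (Set.image2 F.mul A C))) := by
  have H := F.isHyperring
  have hc := H.add_comm
  have ha := H.add_assoc
  have hmc := H.mul_comm
  have hd := H.distrib
  refine ⟨sAddOf_mem_sumSet ha, fun hdd => ?_⟩
  refine ⟨image2_mem_sumSet hc ha hmc hd hdd,
    singleton_mem_sumSet _, singleton_mem_sumSet _,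
    fun A _ B _ => sAddOf_comm' hc A B,
    fun A _ B _ C _ => sAddOf_assoc' ha A B C,
    fun A _ => sAddOf_zero' H.add_zero A,
    fun A _ B _ => Set.image2_comm hmc,
    fun A _ B _ C _ => Set.image2_assoc H.mul_assoc,
    fun A _ => ?_, fun A hA => ?_,
    fun A hA B _ C _ => image2_sAddOf_of_mem hc ha hmc hd hdd A hA B C⟩
  · rw [Set.image2_singleton_right,
      show (fun a => F.mul a F.one) = id from funext H.mul_one, Set.image_id]
  · rw [Set.image2_singleton_right,
      show (fun a => F.mul a F.zero) = fun _ => F.zero from funext H.mul_zero]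
    exact (sumSet_nonempty H.add_nonempty A hA).image_const _
end

section
/- Let Γ be a totally ordered abelian group. Then there is a canonical isomorphism of fuzzy rings 𝓕̄(H_Γ) ≅ K_Γ: the set S(H_Γ) of finite hypersums in H_Γ consists exactly of the singletons {a} and the intervals [0,a] in Γ ∪ {0}, and under this identification the addition, multiplication, distinguished element ε, and sets of null elements of 𝓕̄(H_Γ) and of K_Γ coincide. -/
open Set

section Aux

variable {Γ : Type*} [CommGroup Γ] [LinearOrder Γ] [IsOrderedMonoid Γ]

lemma tropAdd_comm (x y : WithZero Γ) : tropAdd Γ x y = tropAdd Γ y x := by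
  rcases eq_or_ne x y with rfl | h
  · rfl
  · simp [tropAdd, h, h.symm, max_comm]

lemma mem_tropAdd_le {x y z : WithZero Γ} (h : z ∈ tropAdd Γ x y) : z ≤ max x y := by
  unfold tropAdd at h
  split at h
  · exact le_trans (Set.mem_Iic.1 h) (le_max_left _ _)
  · exact (Set.mem_singleton_iff.1 h).le

lemma self_mem_tropAdd_zero (z : WithZero Γ) : z ∈ tropAdd Γ z 0 := by
  rcases eq_or_ne z 0 with rfl | h
  · exact Set.mem_Iic.2 le_rfl
  · simp [tropAdd, h, max_eq_left (zero_le' (a := z))]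

lemma sAddOf_sing_sing (a b : WithZero Γ) :
    sAddOf (tropAdd Γ) {a} {b} = tropAdd Γ a b := by
  simp [sAddOf]

lemma sAddOf_tropAdd_comm (X Y : Set (WithZero Γ)) :
    sAddOf (tropAdd Γ) X Y = sAddOf (tropAdd Γ) Y X := by
  unfold sAddOf
  ext z
  simp only [Set.mem_iUnion, exists_prop]
  constructor
  · rintro ⟨x, hx, y, hy, hz⟩; exact ⟨y, hy, x, hx, tropAdd_comm x y ▸ hz⟩
  · rintro ⟨y, hy, x, hx, hz⟩; exact ⟨x, hx, y, hy, tropAdd_comm y x ▸ hz⟩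

lemma trop_sing_self (a : WithZero Γ) :
    sAddOf (tropAdd Γ) {a} {a} = Set.Iic a := by
  simp [sAddOf, tropAdd]

lemma trop_sing_sing {a b : WithZero Γ} (h : a ≠ b) :
    sAddOf (tropAdd Γ) {a} {b} = {max a b} := by
  simp [sAddOf, tropAdd, h]

lemma trop_sing_Iic_le {a b : WithZero Γ} (h : a ≤ b) :
    sAddOf (tropAdd Γ) {a} (Set.Iic b) = Set.Iic b := by
  ext z
  simp only [sAddOf, Set.mem_iUnion, Set.mem_singleton_iff, Set.mem_Iic, exists_prop,
    exists_eq_left]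
  constructor
  · rintro ⟨y, hy, hz⟩
    exact le_trans (mem_tropAdd_le hz) (max_le h hy)
  · intro hz
    rcases le_or_gt z a with hza | haz
    · exact ⟨a, h, by simpa [tropAdd] using hza⟩
    · exact ⟨z, hz, by simp [tropAdd, haz.ne, max_eq_right haz.le]⟩

lemma trop_sing_Iic_lt {a b : WithZero Γ} (h : b < a) :
    sAddOf (tropAdd Γ) {a} (Set.Iic b) = {a} := by
  ext z
  simp only [sAddOf, Set.mem_iUnion, Set.mem_singleton_iff, Set.mem_Iic, exists_prop,
    exists_eq_left]
  constructor
  · rintro ⟨y, hy, hz⟩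
    have hne : a ≠ y := fun e => absurd (e ▸ hy) (not_le.2 h)
    have : z = max a y := by simpa [tropAdd, hne] using hz
    rw [this, max_eq_left ((hy.trans h.le))]
  · rintro rfl
    have hne : z ≠ b := h.ne'
    exact ⟨b, le_rfl, by simp [tropAdd, hne, max_eq_left h.le]⟩

lemma trop_Iic_Iic (a b : WithZero Γ) :
    sAddOf (tropAdd Γ) (Set.Iic a) (Set.Iic b) = Set.Iic (max a b) := by
  ext z
  simp only [sAddOf, Set.mem_iUnion, Set.mem_Iic, exists_prop]
  constructor
  · rintro ⟨x, hx, y, hy, hz⟩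
    exact le_trans (mem_tropAdd_le hz) (max_le_max hx hy)
  · intro hz
    rcases le_max_iff.1 hz with hza | hzb
    · exact ⟨z, hza, 0, zero_le', self_mem_tropAdd_zero z⟩
    · exact ⟨0, zero_le', z, hzb, by rw [tropAdd_comm]; exact self_mem_tropAdd_zero z⟩

lemma sAddOf_sing_mem_KgSet (x : WithZero Γ) {B : Set (WithZero Γ)} (hB : B ∈ KgSet Γ) :
    sAddOf (tropAdd Γ) {x} B ∈ KgSet Γ := by
  rcases hB with ⟨b, rfl⟩ | ⟨b, rfl⟩
  · rcases eq_or_ne x b with rfl | h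
    · exact Or.inr ⟨x, trop_sing_self x⟩
    · exact Or.inl ⟨max x b, trop_sing_sing h⟩
  · rcases le_or_gt x b with h | h
    · exact Or.inr ⟨b, trop_sing_Iic_le h⟩
    · exact Or.inl ⟨x, trop_sing_Iic_lt h⟩

lemma sumSet_eq_KgSet : sumSet (tropAdd Γ) = KgSet Γ := by
  ext A
  constructor
  · rintro ⟨a, l, rfl⟩
    induction l with
    | nil => exact Or.inl ⟨a, rfl⟩
    | cons x l ih => exact sAddOf_sing_mem_KgSet x ih
  · rintro (⟨a, rfl⟩ | ⟨a, rfl⟩)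
    · exact ⟨a, [], rfl⟩
    · exact ⟨a, [a], (trop_sing_self a).symm⟩

end Aux

/-- For a totally ordered abelian group `Γ` there is a canonical
isomorphism `𝓕̄(H_Γ) ≅ K_Γ`: the set `S(H_Γ)` of finite hypersums in `H_Γ` consists
exactly of the singletons and the intervals `[0,a]`, the addition of `𝓕̄(H_Γ)`
satisfies the defining case formulas of the addition of `K_Γ` (and agrees with it),
the multiplications are both elementwise, `ε` is `{1}` on both sides (`-1 = 1` in
`H_Γ`), and the null elements coincide (the sets containing `0`, i.e. the
intervals). -/
theorem reduced_fuzzy_trop_eq_KGamma (Γ : Type*) [CommGroup Γ] [LinearOrder Γ] [IsOrderedMonoid Γ] :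
    sumSet (tropAdd Γ) = KgSet Γ ∧
    (∀ a b : WithZero Γ, a ≠ b → sAddOf (tropAdd Γ) {a} {b} = {max a b}) ∧
    (∀ a : WithZero Γ, sAddOf (tropAdd Γ) {a} {a} = Set.Iic a) ∧
    (∀ a b : WithZero Γ, a ≤ b → sAddOf (tropAdd Γ) {a} (Set.Iic b) = Set.Iic b) ∧
    (∀ a b : WithZero Γ, b < a → sAddOf (tropAdd Γ) {a} (Set.Iic b) = {a}) ∧
    (∀ a b : WithZero Γ,
      sAddOf (tropAdd Γ) (Set.Iic a) (Set.Iic b) = Set.Iic (max a b)) ∧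
    (∀ A ∈ KgSet Γ, ∀ B ∈ KgSet Γ, sAddOf (tropAdd Γ) A B = KgAdd Γ A B) ∧
    ((0 : WithZero Γ) ∈ tropAdd Γ 1 1) ∧
    (∀ A ∈ KgSet Γ, ((0 : WithZero Γ) ∈ A ↔ ∃ a : WithZero Γ, A = Set.Iic a)) := by
  refine ⟨sumSet_eq_KgSet, fun a b h => trop_sing_sing h, trop_sing_self,
    fun a b h => trop_sing_Iic_le h, fun a b h => trop_sing_Iic_lt h, trop_Iic_Iic,
    ?_, ?_, ?_⟩
  · intro A hA B hB
    unfold KgAdd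
    by_cases h1 : ∃ a b : WithZero Γ, A = {a} ∧ B = {b}
    · rw [dif_pos h1]
      obtain ⟨hA', hB'⟩ := h1.choose_spec.choose_spec
      set b := h1.choose_spec.choose with hbdef
      set a := h1.choose with hadef
      rw [hA', hB', sAddOf_sing_sing]
      split_ifs with h <;> simp [tropAdd, h]
    · rw [dif_neg h1]
      by_cases h2 : ∃ a b : WithZero Γ, A = {a} ∧ B = Set.Iic b
      · rw [dif_pos h2]
        obtain ⟨hA', hB'⟩ := h2.choose_spec.choose_spec
        set b := h2.choose_spec.choose with hbdef
        set a := h2.choose with hadef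
        rw [hA', hB']
        split_ifs with hle
        · exact trop_sing_Iic_le hle
        · exact trop_sing_Iic_lt (not_le.1 hle)
      · rw [dif_neg h2]
        by_cases h3 : ∃ a b : WithZero Γ, A = Set.Iic a ∧ B = {b}
        · rw [dif_pos h3]
          obtain ⟨hA', hB'⟩ := h3.choose_spec.choose_spec
          set b := h3.choose_spec.choose with hbdef
          set a := h3.choose with hadef
          rw [hA', hB', sAddOf_tropAdd_comm]
          split_ifs with hle
          · exact trop_sing_Iic_le hle
          · exact trop_sing_Iic_lt (not_le.1 hle)
        · rw [dif_neg h3]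
          by_cases h4 : ∃ a b : WithZero Γ, A = Set.Iic a ∧ B = Set.Iic b
          · rw [dif_pos h4]
            obtain ⟨hA', hB'⟩ := h4.choose_spec.choose_spec
            set b := h4.choose_spec.choose with hbdef
            set a := h4.choose with hadef
            rw [hA', hB', trop_Iic_Iic]
          · exfalso
            rcases hA with ⟨a, hA'⟩ | ⟨a, hA'⟩ <;> rcases hB with ⟨b, hB'⟩ | ⟨b, hB'⟩
            · exact h1 ⟨a, b, hA', hB'⟩
            · exact h2 ⟨a, b, hA', hB'⟩
            · exact h3 ⟨a, b, hA', hB'⟩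
            · exact h4 ⟨a, b, hA', hB'⟩
  · simp [tropAdd, zero_le']
  · intro A hA
    rcases hA with ⟨a, rfl⟩ | ⟨a, rfl⟩
    · constructor
      · intro h
        have : a = 0 := (Set.mem_singleton_iff.1 h).symm
        subst this
        exact ⟨0, by ext z; simp [le_zero_iff]⟩
      · rintro ⟨b, hb⟩
        rw [hb]
        exact Set.mem_Iic.2 zero_le'
    · exact ⟨fun _ => ⟨a, rfl⟩, fun _ => Set.mem_Iic.2 zero_le'⟩
end
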